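/- Strong duality value for the f-block (Fenchel–Rockafellar instance): for γ, τ₁ > 0, positive a ∈ ℝⁿ and positive k ∈ ℝⁿ, min over s ≥ 0 of τ₁·KL(s|a) + (1/γ)·KL(s|k) equals sup over f ∈ ℝⁿ of −τ₁⟨exp(−f/τ₁) − 1, a⟩ − (1/γ)⟨exp(γf) − 1, k⟩, and both optima are attained. -/
import Mathlib

/-- pointwise nonnegativity of the generalized KL integrand -/
lemma klpt_aux (x y : ℝ) (hx : 0 ≤ x) (hy : 0 < y) :
    0 ≤ x * Real.log (x / y) + y - x := by
  rcases eq_or_lt_of_le hx with h | h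
  · simp [← h, hy.le]
  · have hlog : Real.log (y / x) ≤ y / x - 1 := Real.log_le_sub_one_of_pos (by positivity)
    have hinv : Real.log (x / y) = - Real.log (y / x) := by
      rw [← Real.log_inv]; congr 1; field_simp
    have h2 : x * Real.log (y / x) ≤ x * (y / x - 1) :=
      mul_le_mul_of_nonneg_left hlog hx
    have h3 : x * (y / x - 1) = y - x := by field_simp
    nlinarith
/-- two-point convexity of exp -/
lemma expcvx_aux (w₁ w₂ u v : ℝ) (h1 : 0 ≤ w₁) (h2 : 0 ≤ w₂) (hs : w₁ + w₂ = 1) :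
    Real.exp (w₁ * u + w₂ * v) ≤ w₁ * Real.exp u + w₂ * Real.exp v := by
  set m := w₁ * u + w₂ * v with hm'
  have key : w₁ * (u - m) + w₂ * (v - m) = 0 := by
    linear_combination (-1 : ℝ) * hm' + (-m) * hs
  have hu : 1 + (u - m) ≤ Real.exp (u - m) := by linarith [Real.add_one_le_exp (u - m)]
  have hv : 1 + (v - m) ≤ Real.exp (v - m) := by linarith [Real.add_one_le_exp (v - m)]
  have eu : Real.exp u = Real.exp m * Real.exp (u - m) := by
    rw [← Real.exp_add]; ring_nf
  have ev : Real.exp v = Real.exp m * Real.exp (v - m) := by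
    rw [← Real.exp_add]; ring_nf
  have hmpos : (0:ℝ) < Real.exp m := Real.exp_pos m
  have A : Real.exp m * (w₁ * (1 + (u - m))) ≤ Real.exp m * (w₁ * Real.exp (u - m)) :=
    mul_le_mul_of_nonneg_left (mul_le_mul_of_nonneg_left hu h1) hmpos.le
  have B : Real.exp m * (w₂ * (1 + (v - m))) ≤ Real.exp m * (w₂ * Real.exp (v - m)) :=
    mul_le_mul_of_nonneg_left (mul_le_mul_of_nonneg_left hv h2) hmpos.le
  have C : Real.exp m * (w₁ * (1 + (u - m))) + Real.exp m * (w₂ * (1 + (v - m)))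
      = Real.exp m := by
    have : w₁ * (1 + (u - m)) + w₂ * (1 + (v - m))
        = (w₁ + w₂) + (w₁ * (u - m) + w₂ * (v - m)) := by ring
    rw [← mul_add, this, hs, key]; ring
  rw [eu, ev]; nlinarith [A, B, C]

theorem f_block_strong_duality (n : ℕ) (γ τ₁ : ℝ) (hγ : 0 < γ) (hτ : 0 < τ₁)
    (a k : Fin n → ℝ) (ha : ∀ i, 0 < a i) (hk : ∀ i, 0 < k i) :
    let KL : (Fin n → ℝ) → (Fin n → ℝ) → ℝ := fun p q =>
      ∑ i, (p i * Real.log (p i / q i) + q i - p i)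
    let primal : (Fin n → ℝ) → ℝ := fun s => τ₁ * KL s a + (1/γ) * KL s k
    let dual : (Fin n → ℝ) → ℝ := fun f =>
      -τ₁ * (∑ i, (Real.exp (-f i / τ₁) - 1) * a i) -
      (1/γ) * (∑ i, (Real.exp (γ * f i) - 1) * k i)
    ∃ s f : Fin n → ℝ, (∀ i, 0 ≤ s i) ∧
      (∀ s', (∀ i, 0 ≤ s' i) → primal s ≤ primal s') ∧
      (∀ f', dual f' ≤ dual f) ∧
      primal s = dual f := by
  intro KL primal dual
  have hτ' : τ₁ ≠ 0 := hτ.ne'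
  have hγ' : γ ≠ 0 := hγ.ne'
  have hγτ : 0 < 1 + γ * τ₁ := by positivity
  have hγτ' : (1 + γ * τ₁) ≠ 0 := hγτ.ne'
  have hT : 0 < τ₁ + 1/γ := by positivity
  set α : ℝ := γ * τ₁ / (1 + γ * τ₁) with hα
  set β : ℝ := 1 / (1 + γ * τ₁) with hβ
  have hαβ : α + β = 1 := by rw [hα, hβ]; field_simp; ring
  have hα0 : 0 ≤ α := by rw [hα]; positivity
  have hβ0 : 0 ≤ β := by rw [hβ]; positivity
  set s : Fin n → ℝ := fun i => Real.exp (α * Real.log (a i) + β * Real.log (k i)) with hsdef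
  set f : Fin n → ℝ := fun i => τ₁ * β * (Real.log (a i) - Real.log (k i)) with hfdef
  have hspos : ∀ i, 0 < s i := fun i => Real.exp_pos _
  have h1 : ∀ i, Real.exp (-f i / τ₁) * a i = s i := by
    intro i
    rw [hsdef]
    conv_lhs => rw [← Real.exp_log (ha i), ← Real.exp_add]
    congr 1
    rw [hfdef, hα, hβ]
    field_simp
    ring
  have h2 : ∀ i, Real.exp (γ * f i) * k i = s i := by
    intro i
    rw [hsdef]
    conv_lhs => rw [← Real.exp_log (hk i), ← Real.exp_add]
    congr 1
    rw [hfdef, hα, hβ]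
    field_simp
    ring
  have hlog1 : ∀ i, Real.log (s i / a i) = -f i / τ₁ := by
    intro i
    rw [← h1 i, mul_div_cancel_right₀ _ (ha i).ne', Real.log_exp]
  have hlog2 : ∀ i, Real.log (s i / k i) = γ * f i := by
    intro i
    rw [← h2 i, mul_div_cancel_right₀ _ (hk i).ne', Real.log_exp]
  have hPval : primal s = ∑ i, (τ₁ * a i + (1/γ) * k i - (τ₁ + 1/γ) * s i) := by
    show τ₁ * (∑ i, (s i * Real.log (s i / a i) + a i - s i))
        + (1/γ) * (∑ i, (s i * Real.log (s i / k i) + k i - s i)) = _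
    rw [Finset.mul_sum, Finset.mul_sum, ← Finset.sum_add_distrib]
    refine Finset.sum_congr rfl fun i _ => ?_
    rw [hlog1 i, hlog2 i]
    field_simp
    ring
  have hDval : dual f = ∑ i, (τ₁ * a i + (1/γ) * k i - (τ₁ + 1/γ) * s i) := by
    show -τ₁ * (∑ i, (Real.exp (-f i / τ₁) - 1) * a i)
        - (1/γ) * (∑ i, (Real.exp (γ * f i) - 1) * k i) = _
    rw [Finset.mul_sum, Finset.mul_sum, ← Finset.sum_sub_distrib]
    refine Finset.sum_congr rfl fun i _ => ?_
    rw [sub_mul, one_mul, h1 i, sub_mul, one_mul, h2 i]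
    ring
  have hls : ∀ i, Real.log (s i) = α * Real.log (a i) + β * Real.log (k i) := by
    intro i; rw [hsdef]; exact Real.log_exp _
  have hident : ∀ i, ∀ x : ℝ, 0 ≤ x →
      τ₁ * (x * Real.log (x / a i)) + (1/γ) * (x * Real.log (x / k i))
        = (τ₁ + 1/γ) * (x * Real.log (x / s i)) := by
    intro i x hx
    rcases eq_or_lt_of_le hx with h0 | h0
    · simp [← h0]
    · rw [Real.log_div h0.ne' (ha i).ne', Real.log_div h0.ne' (hk i).ne',
        Real.log_div h0.ne' (hspos i).ne', hls i, hα, hβ]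
      field_simp
      ring
  refine ⟨s, f, fun i => (hspos i).le, ?_, ?_, ?_⟩
  · -- primal optimality
    intro s' hs'
    rw [hPval]
    show _ ≤ τ₁ * (∑ i, (s' i * Real.log (s' i / a i) + a i - s' i))
        + (1/γ) * (∑ i, (s' i * Real.log (s' i / k i) + k i - s' i))
    rw [Finset.mul_sum, Finset.mul_sum, ← Finset.sum_add_distrib]
    refine Finset.sum_le_sum fun i _ => ?_
    have hkl := klpt_aux (s' i) (s i) (hs' i) (hspos i)
    have hr := hident i (s' i) (hs' i)
    nlinarith [mul_le_mul_of_nonneg_left hkl hT.le, hr]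
  · -- dual optimality
    intro f'
    rw [hDval]
    show -τ₁ * (∑ i, (Real.exp (-f' i / τ₁) - 1) * a i)
        - (1/γ) * (∑ i, (Real.exp (γ * f' i) - 1) * k i) ≤ _
    rw [Finset.mul_sum, Finset.mul_sum, ← Finset.sum_sub_distrib]
    refine Finset.sum_le_sum fun i _ => ?_
    have hcvx := expcvx_aux α β (Real.log (a i) - f' i / τ₁) (Real.log (k i) + γ * f' i)
      hα0 hβ0 hαβ
    have hu : Real.exp (Real.log (a i) - f' i / τ₁) = Real.exp (-f' i / τ₁) * a i := by
      rw [show Real.log (a i) - f' i / τ₁ = -f' i / τ₁ + Real.log (a i) by ring,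
        Real.exp_add, Real.exp_log (ha i)]
    have hv : Real.exp (Real.log (k i) + γ * f' i) = Real.exp (γ * f' i) * k i := by
      rw [show Real.log (k i) + γ * f' i = γ * f' i + Real.log (k i) by ring,
        Real.exp_add, Real.exp_log (hk i)]
    have hse : Real.exp (α * (Real.log (a i) - f' i / τ₁) + β * (Real.log (k i) + γ * f' i))
        = s i := by
      rw [hsdef]
      congr 1
      rw [hα, hβ]
      field_simp
      ring
    have hTα : (τ₁ + 1/γ) * α = τ₁ := by rw [hα]; field_simp; ring
    have hTβ : (τ₁ + 1/γ) * β = 1/γ := by rw [hβ]; field_simp; ring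
    have key : (τ₁ + 1/γ) * s i ≤ τ₁ * (Real.exp (-f' i / τ₁) * a i)
        + (1/γ) * (Real.exp (γ * f' i) * k i) := by
      calc (τ₁ + 1/γ) * s i
          ≤ (τ₁ + 1/γ) * (α * Real.exp (Real.log (a i) - f' i / τ₁)
              + β * Real.exp (Real.log (k i) + γ * f' i)) := by
            apply mul_le_mul_of_nonneg_left _ hT.le
            rw [← hse]; exact hcvx
        _ = ((τ₁ + 1/γ) * α) * Real.exp (Real.log (a i) - f' i / τ₁)
              + ((τ₁ + 1/γ) * β) * Real.exp (Real.log (k i) + γ * f' i) := by ring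
        _ = τ₁ * (Real.exp (-f' i / τ₁) * a i)
              + (1/γ) * (Real.exp (γ * f' i) * k i) := by rw [hTα, hTβ, hu, hv]
    nlinarith [key]
  · rw [hPval, hDval]
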